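/- Let R be a commutative Noetherian local ring, let f ∈ R be a non-zerodivisor, and let ψ: R^k → (R/(f))^l be a surjective R-module homomorphism for some natural numbers k, l. Then ker ψ is a free R-module of rank k. -/

import Mathlib

/-- the local algebra behind Maruyama's elementary
transformation.  Let `R` be a commutative Noetherian local ring, `f ∈ R` a
non-zerodivisor, and `ψ : R^k → (R/(f))^l` a surjective `R`-module
homomorphism.  Then `ker ψ` is a free `R`-module of rank `k`. -/
theorem maruyama_kernel_free {R : Type*} [CommRing R] [IsNoetherianRing R]
    [IsLocalRing R] {f : R} (hf : f ∈ nonZeroDivisors R) (k l : ℕ)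
    (ψ : (Fin k → R) →ₗ[R] (Fin l → R ⧸ Ideal.span ({f} : Set R)))
    (hψ : Function.Surjective ψ) :
    Module.Free R (LinearMap.ker ψ) ∧
      Module.finrank R (LinearMap.ker ψ) = k := by
  let I := Ideal.span ({f} : Set R)
  -- the componentwise quotient map
  let π : (Fin l → R) →ₗ[R] (Fin l → R ⧸ I) :=
    LinearMap.pi fun i => I.mkQ ∘ₗ LinearMap.proj i
  have hπ : Function.Surjective π := by
    intro y
    choose z hz using fun i => Ideal.Quotient.mk_surjective (y i)
    exact ⟨z, funext fun i => hz i⟩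
  have hkerπ : ∀ v : Fin l → R, π v = 0 ↔ ∃ w, v = f • w := by
    intro v
    constructor
    · intro h
      have hm : ∀ i, v i ∈ I := by
        intro i
        rw [← Ideal.Quotient.eq_zero_iff_mem]
        exact congrFun h i
      choose w hw using fun i => Ideal.mem_span_singleton'.mp (hm i)
      exact ⟨w, funext fun i => by simpa [mul_comm] using (hw i).symm⟩
    · rintro ⟨w, rfl⟩
      funext i
      show I.mkQ ((f • w) i) = 0
      rw [Submodule.mkQ_apply, Submodule.Quotient.mk_eq_zero]
      exact Ideal.mem_span_singleton.mpr ⟨w i, rfl⟩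
  -- lift ψ along π
  obtain ⟨φ, hφ⟩ := Module.projective_lifting_property π ψ hπ
  have hφ' : ∀ x, π (φ x) = ψ x := fun x => congrFun (congrArg DFunLike.coe hφ) x
  -- the key surjection Φ : R^k × R^l → R^l
  let Φ : ((Fin k → R) × (Fin l → R)) →ₗ[R] (Fin l → R) :=
    φ ∘ₗ LinearMap.fst R _ _ - f • LinearMap.snd R _ _
  have hΦ : ∀ x y, Φ (x, y) = φ x - f • y := fun x y => rfl
  have hΦsurj : Function.Surjective Φ := by
    intro v
    obtain ⟨x, hx⟩ := hψ (π v)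
    have h0 : π (φ x - v) = 0 := by rw [map_sub, hφ' x, hx, sub_self]
    obtain ⟨w, hw⟩ := (hkerπ _).1 h0
    refine ⟨(x, w), ?_⟩
    rw [hΦ, ← hw]
    abel
  -- kernel of Φ is isomorphic to kernel of ψ
  have hmem : ∀ p : (Fin k → R) × (Fin l → R), p ∈ LinearMap.ker Φ → p.1 ∈ LinearMap.ker ψ := by
    rintro ⟨x, y⟩ hp
    have h1 : φ x - f • y = 0 := hp
    have h2 : φ x = f • y := by rwa [sub_eq_zero] at h1
    have h0 : π (φ x) = 0 := (hkerπ _).2 ⟨y, h2⟩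
    simpa [LinearMap.mem_ker, hφ' x] using h0
  let g : LinearMap.ker Φ →ₗ[R] LinearMap.ker ψ :=
    LinearMap.codRestrict _ ((LinearMap.fst R _ _) ∘ₗ (LinearMap.ker Φ).subtype)
      fun p => hmem p.1 p.2
  have hginj : Function.Injective g := by
    rintro ⟨⟨x, y⟩, hp⟩ ⟨⟨x', y'⟩, hp'⟩ h
    have hx : x = x' := congrArg Subtype.val h
    subst hx
    have h1 : φ x - f • y = 0 := hp
    have h2 : φ x - f • y' = 0 := hp'
    have h3 : f • y = f • y' := sub_right_injective (h1.trans h2.symm)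
    have hy : y = y' := by
      funext i
      have h5 : f * y i = f * y' i := congrFun h3 i
      have h4 : (y i - y' i) * f = 0 := by ring_nf; linear_combination h5
      exact sub_eq_zero.mp (hf.2 _ h4)
    exact Subtype.ext (Prod.ext rfl hy)
  have hgsurj : Function.Surjective g := by
    rintro ⟨x, hx⟩
    have h0 : π (φ x) = 0 := by rw [hφ' x]; exact hx
    obtain ⟨w, hw⟩ := (hkerπ _).1 h0
    refine ⟨⟨(x, w), ?_⟩, rfl⟩
    show φ x - f • w = 0
    rw [hw, sub_self]
  let eκ : LinearMap.ker Φ ≃ₗ[R] LinearMap.ker ψ := LinearEquiv.ofBijective g ⟨hginj, hgsurj⟩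
  -- Φ splits since R^l is projective
  obtain ⟨σ, hσ⟩ := Module.projective_lifting_property Φ LinearMap.id hΦsurj
  have hσ' : ∀ v, Φ (σ v) = v := fun v => congrFun (congrArg DFunLike.coe hσ) v
  have hσinj : Function.Injective σ := fun a b h => by
    rw [← hσ' a, ← hσ' b, h]
  -- ker Φ is a direct summand, hence projective
  let s : ((Fin k → R) × (Fin l → R)) →ₗ[R] LinearMap.ker Φ :=
    LinearMap.codRestrict _ (LinearMap.id - σ ∘ₗ Φ)
      (fun x => by simp [LinearMap.mem_ker, hσ'])
  have hs : s ∘ₗ (LinearMap.ker Φ).subtype = LinearMap.id := by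
    apply LinearMap.ext
    intro x
    apply Subtype.ext
    show (x : (Fin k → R) × (Fin l → R)) - σ (Φ x) = x
    rw [LinearMap.mem_ker.mp x.2, map_zero, sub_zero]
  have hprojΦ : Module.Projective R (LinearMap.ker Φ) :=
    Module.Projective.of_split (LinearMap.ker Φ).subtype s hs
  have hproj : Module.Projective R (LinearMap.ker ψ) := Module.Projective.of_equiv eκ
  have hfin : Module.Finite R (LinearMap.ker ψ) :=
    Module.Finite.iff_fg.mpr (IsNoetherian.noetherian _)
  have hFP : Module.FinitePresentation R (LinearMap.ker ψ) :=
    Module.finitePresentation_of_projective R _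
  have hfree : Module.Free R (LinearMap.ker ψ) := Module.free_of_flat_of_isLocalRing
  refine ⟨hfree, ?_⟩
  -- now compute the rank using the splitting of Φ
  have hfinΦ : Module.Finite R (LinearMap.ker Φ) := Module.Finite.equiv eκ.symm
  have hfreeΦ : Module.Free R (LinearMap.ker Φ) := Module.Free.of_equiv eκ.symm
  -- the projection onto range σ
  let pr : ((Fin k → R) × (Fin l → R)) →ₗ[R] LinearMap.range σ :=
    LinearMap.codRestrict _ (σ ∘ₗ Φ) (fun x => ⟨Φ x, rfl⟩)
  have hpr : ∀ x : LinearMap.range σ, pr x = x := by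
    rintro ⟨_, v, rfl⟩
    exact Subtype.ext (show σ (Φ (σ v)) = σ v by rw [hσ'])
  have hcompl : IsCompl (LinearMap.range σ) (LinearMap.ker pr) :=
    LinearMap.isCompl_of_proj hpr
  have hkerpr : LinearMap.ker pr = LinearMap.ker Φ := by
    ext x
    constructor
    · intro h
      have : σ (Φ x) = 0 := congrArg Subtype.val (h : pr x = 0)
      have := hσinj (this.trans (map_zero σ).symm)
      exact this
    · intro h
      exact Subtype.ext (show σ (Φ x) = 0 by rw [(LinearMap.mem_ker).mp h, map_zero])
  rw [hkerpr] at hcompl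
  let e2 : (LinearMap.range σ × LinearMap.ker Φ) ≃ₗ[R] ((Fin k → R) × (Fin l → R)) :=
    Submodule.prodEquivOfIsCompl _ _ hcompl
  let e3 : (Fin l → R) ≃ₗ[R] LinearMap.range σ := LinearEquiv.ofInjective σ hσinj
  have hfinσ : Module.Finite R (LinearMap.range σ) := Module.Finite.equiv e3
  have hfreeσ : Module.Free R (LinearMap.range σ) := Module.Free.of_equiv e3
  have h1 : Module.finrank R (LinearMap.range σ × LinearMap.ker Φ)
      = Module.finrank R ((Fin k → R) × (Fin l → R)) := e2.finrank_eq
  rw [Module.finrank_prod, Module.finrank_prod, Module.finrank_pi, Module.finrank_pi,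
    ← e3.finrank_eq, Module.finrank_pi] at h1
  simp only [Fintype.card_fin] at h1
  have h2 : Module.finrank R (LinearMap.ker ψ) = Module.finrank R (LinearMap.ker Φ) :=
    (eκ.finrank_eq).symm
  omega
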